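/- Let E be a real inner product space, D a finite set with |D| = N, and f_n : E → ℝ differentiable for n ∈ D with global loss F(w) = (1/N)·∑_{n∈D} f_n(w). Assume F is μ-strongly convex and L-smooth with 0 < μ ≤ L, the sample-gradient bound ‖∇f_n(w)‖² ≤ ξ1 + ξ2·‖∇F(w)‖² holds for all n ∈ D and w ∈ E (ξ1 ≥ 0, ξ2 > 0), and w* is a global minimizer of F. Let N_f, N_c be positive integers with N_f ≤ N, N_c ≤ N, A = N_f·(N−N_f) + N_c·(N−N_c) > 0, and 0 < ξ2 < (N_f+N_c)²/(4A); set a1 = N_f/(N_f+N_c), a2 = N_c/(N_f+N_c), ρ1 = 1 − μ/L + 4μξ2·A/(L·(N_f+N_c)²), ρ2 = 2ξ1·A/(L·(N_f+N_c)²). For each round t = 1, …, T, let S_{f,t}, S_{c,t} ⊆ D with |S_{f,t}| = N_f, |S_{c,t}| = N_c, and update with error-free aggregation: w_{t+1} = w_t − (1/L)·(a1·(1/N_f)·∑_{n∈S_{f,t}} ∇f_n(w_t) + a2·(1/N_c)·∑_{n∈S_{c,t}} ∇f_n(w_t)). Then F(w_{T+1}) − F(w*) ≤ ρ1^T·(F(w_1)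 − F(w*)) + ρ2·(1 − ρ1^T)/(1 − ρ1). -/

import Mathlib

local notation "⟪" x ", " y "⟫" => @inner ℝ _ _ x y

open InnerProductSpace in
lemma aux_gradF {E : Type*} [NormedAddCommGroup E] [InnerProductSpace ℝ E] [CompleteSpace E]
    {ι : Type*} (D : Finset ι) (N : ℕ)
    (f : ι → E → ℝ) (hf : ∀ n ∈ D, Differentiable ℝ (f n))
    (F : E → ℝ) (hF : ∀ w : E, F w = (1 / (N : ℝ)) * ∑ n ∈ D, f n w)
    (x : E) : gradient F x = (1 / (N : ℝ)) • ∑ n ∈ D, gradient (f n) x := by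
  have h1 : ∀ n ∈ D, HasFDerivAt (f n) (toDual ℝ E (gradient (f n) x)) x :=
    fun n hn => ((hf n hn).differentiableAt.hasGradientAt).hasFDerivAt
  have h2 : HasFDerivAt (fun w => ∑ n ∈ D, f n w)
      (∑ n ∈ D, toDual ℝ E (gradient (f n) x)) x := HasFDerivAt.fun_sum h1
  have h3 : HasFDerivAt F ((1 / (N : ℝ)) • ∑ n ∈ D, toDual ℝ E (gradient (f n) x)) x := by
    have hFe : F = fun w => (1 / (N : ℝ)) * ∑ n ∈ D, f n w := funext hF
    rw [hFe]
    exact h2.const_mul _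
  have h4 := (hasFDerivAt_iff_hasGradientAt.mp h3)
  rw [h4.gradient, map_smul, map_sum]
  simp
  rfl

set_option maxHeartbeats 4000000 in
/-- Corollary 3 of the paper: optimality gap of SemiFL over error-free wireless
channels (no aggregation distortion and no noise) after `T` rounds. -/
theorem semifl_optimality_gap_error_free
    {E : Type*} [NormedAddCommGroup E] [InnerProductSpace ℝ E] [CompleteSpace E]
    {ι : Type*} (D : Finset ι) (N : ℕ) (hN : D.card = N)
    (f : ι → E → ℝ) (hf : ∀ n ∈ D, Differentiable ℝ (f n))
    (F : E → ℝ) (hF : ∀ w : E, F w = (1 / (N : ℝ)) * ∑ n ∈ D, f n w)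
    (μ L : ℝ) (hμ : 0 < μ) (hμL : μ ≤ L)
    (hsc : ∀ w w' : E,
      F w ≥ F w' + ⟪w - w', gradient F w'⟫ + μ / 2 * ‖w - w'‖ ^ 2)
    (hsm : ∀ w w' : E,
      F w ≤ F w' + ⟪w - w', gradient F w'⟫ + L / 2 * ‖w - w'‖ ^ 2)
    (ξ1 ξ2 : ℝ) (hξ1 : 0 ≤ ξ1) (hξ2pos : 0 < ξ2)
    (hgradbound : ∀ n ∈ D, ∀ w : E,
      ‖gradient (f n) w‖ ^ 2 ≤ ξ1 + ξ2 * ‖gradient F w‖ ^ 2)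
    (wstar : E) (hmin : ∀ w : E, F wstar ≤ F w)
    (Nf Nc : ℕ) (hNf : 0 < Nf) (hNc : 0 < Nc) (hNfN : Nf ≤ N) (hNcN : Nc ≤ N)
    (A : ℝ) (hA : A = (Nf : ℝ) * ((N : ℝ) - Nf) + (Nc : ℝ) * ((N : ℝ) - Nc))
    (hApos : 0 < A)
    (hξ2A : ξ2 < ((Nf : ℝ) + Nc) ^ 2 / (4 * A))
    (a1 a2 : ℝ) (ha1 : a1 = (Nf : ℝ) / ((Nf : ℝ) + Nc))
    (ha2 : a2 = (Nc : ℝ) / ((Nf : ℝ) + Nc))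
    (ρ1 ρ2 : ℝ)
    (hρ1 : ρ1 = 1 - μ / L + 4 * μ * ξ2 * A / (L * ((Nf : ℝ) + Nc) ^ 2))
    (hρ2 : ρ2 = 2 * ξ1 * A / (L * ((Nf : ℝ) + Nc) ^ 2))
    (T : ℕ) (hT : 1 ≤ T)
    (Sf Sc : ℕ → Finset ι)
    (hSfD : ∀ t : ℕ, 1 ≤ t → t ≤ T → Sf t ⊆ D)
    (hScD : ∀ t : ℕ, 1 ≤ t → t ≤ T → Sc t ⊆ D)
    (hSf : ∀ t : ℕ, 1 ≤ t → t ≤ T → (Sf t).card = Nf)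
    (hSc : ∀ t : ℕ, 1 ≤ t → t ≤ T → (Sc t).card = Nc)
    (w : ℕ → E)
    (hupd : ∀ t : ℕ, 1 ≤ t → t ≤ T →
      w (t + 1) = w t - (1 / L) •
        (a1 • ((1 / (Nf : ℝ)) • ∑ n ∈ Sf t, gradient (f n) (w t))
          + a2 • ((1 / (Nc : ℝ)) • ∑ n ∈ Sc t, gradient (f n) (w t)))) :
    F (w (T + 1)) - F wstar ≤
      ρ1 ^ T * (F (w 1) - F wstar) + ρ2 * (1 - ρ1 ^ T) / (1 - ρ1) := by
  classical
  have hL : 0 < L := lt_of_lt_of_le hμ hμL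
  have hNpos : 0 < N := lt_of_lt_of_le hNf hNfN
  have hNR : (0:ℝ) < (N:ℝ) := by exact_mod_cast hNpos
  have hNfR : (0:ℝ) < (Nf:ℝ) := by exact_mod_cast hNf
  have hNcR : (0:ℝ) < (Nc:ℝ) := by exact_mod_cast hNc
  have hNfNR : (Nf:ℝ) ≤ (N:ℝ) := by exact_mod_cast hNfN
  have hNcNR : (Nc:ℝ) ≤ (N:ℝ) := by exact_mod_cast hNcN
  obtain ⟨S, hSdef⟩ : ∃ s : ℝ, s = ((Nf : ℝ) + Nc) ^ 2 := ⟨_, rfl⟩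
  rw [← hSdef] at hρ1 hρ2 hξ2A
  have hSpos : 0 < S := by rw [hSdef]; positivity
  have hS0 : S ≠ 0 := ne_of_gt hSpos
  have hLS : 0 < L * S := mul_pos hL hSpos
  have h4A : 4 * A * ξ2 < S := by
    rw [lt_div_iff₀ (by linarith : (0:ℝ) < 4 * A)] at hξ2A; linarith
  have hgradF : ∀ x : E, gradient F x = (1 / (N : ℝ)) • ∑ n ∈ D, gradient (f n) x :=
    aux_gradF D N f hf F hF
  -- PL inequality
  have hPL : ∀ y : E, 2 * μ * (F y - F wstar) ≤ ‖gradient F y‖ ^ 2 := by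
    intro y
    have h := hsc wstar y
    set g := gradient F y with hg
    set u := wstar - y with hu
    have hexp2 : μ^2 * ‖u + (1/μ) • g‖ ^ 2
        = μ^2 * ‖u‖ ^ 2 + 2 * μ * ⟪u, g⟫ + ‖g‖ ^ 2 := by
      rw [norm_add_sq_real, real_inner_smul_right, norm_smul, Real.norm_eq_abs,
        abs_of_pos (by positivity : (0:ℝ) < 1/μ)]
      field_simp
    have h2 : 0 ≤ μ^2 * ‖u‖ ^ 2 + 2 * μ * ⟪u, g⟫ + ‖g‖ ^ 2 := by
      rw [← hexp2]; positivity
    nlinarith [h2, mul_le_mul_of_nonneg_left (ge_iff_le.mp h) (by positivity : (0:ℝ) ≤ 2*μ), hμ]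
  -- one-step recursion
  have hstep : ∀ t : ℕ, 1 ≤ t → t ≤ T →
      F (w (t+1)) - F wstar ≤ ρ1 * (F (w t) - F wstar) + ρ2 := by
    intro t ht1 ht2
    have hupd' := hupd t ht1 ht2
    obtain ⟨G, hG⟩ : ∃ G, G = gradient F (w t) := ⟨_, rfl⟩
    have hBnn : (0:ℝ) ≤ ξ1 + ξ2 * ‖G‖ ^ 2 := by positivity
    obtain ⟨sB, hsBdef⟩ : ∃ s : ℝ, s = Real.sqrt (ξ1 + ξ2 * ‖G‖ ^ 2) := ⟨_, rfl⟩
    have hsBnn : 0 ≤ sB := hsBdef ▸ Real.sqrt_nonneg _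
    have hsB2 : sB ^ 2 = ξ1 + ξ2 * ‖G‖ ^ 2 := hsBdef ▸ Real.sq_sqrt hBnn
    have hgn : ∀ n ∈ D, ‖gradient (f n) (w t)‖ ≤ sB := by
      intro n hn
      have hb := hgradbound n hn (w t)
      rw [← hG] at hb
      rw [hsBdef]
      exact (Real.le_sqrt (norm_nonneg _) hBnn).mpr hb
    have hsamp : ∀ (St : Finset ι) (Nt : ℕ), St ⊆ D → St.card = Nt → 0 < Nt →
        ‖(1/(Nt:ℝ)) • ∑ n ∈ St, gradient (f n) (w t) - G‖
          ≤ 2 * (((N:ℝ) - Nt) / N) * sB := by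
      intro St Nt hsub hcard hNt
      have hNtN : Nt ≤ N := by rw [← hcard, ← hN]; exact Finset.card_le_card hsub
      have hNtR : (0:ℝ) < (Nt:ℝ) := by exact_mod_cast hNt
      have hNtNR : (Nt:ℝ) ≤ (N:ℝ) := by exact_mod_cast hNtN
      have hG' : G = (1/(N:ℝ)) • ((∑ n ∈ St, gradient (f n) (w t))
          + ∑ n ∈ D \ St, gradient (f n) (w t)) := by
        rw [hG, hgradF (w t)]
        congr 1
        rw [← Finset.sum_sdiff hsub, add_comm]
      have hdecomp : (1/(Nt:ℝ)) • ∑ n ∈ St, gradient (f n) (w t) - G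
          = (1/(Nt:ℝ) - 1/(N:ℝ)) • ∑ n ∈ St, gradient (f n) (w t)
            - (1/(N:ℝ)) • ∑ n ∈ D \ St, gradient (f n) (w t) := by
        rw [hG']; module
      have hb1 : ‖∑ n ∈ St, gradient (f n) (w t)‖ ≤ (Nt:ℝ) * sB := by
        calc ‖∑ n ∈ St, gradient (f n) (w t)‖ ≤ ∑ n ∈ St, ‖gradient (f n) (w t)‖ :=
              norm_sum_le _ _
        _ ≤ St.card • sB := Finset.sum_le_card_nsmul _ _ _ (fun n hn => hgn n (hsub hn))
        _ = (Nt:ℝ) * sB := by rw [hcard, nsmul_eq_mul]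
      have hb2 : ‖∑ n ∈ D \ St, gradient (f n) (w t)‖ ≤ ((N:ℝ) - Nt) * sB := by
        calc ‖∑ n ∈ D \ St, gradient (f n) (w t)‖
            ≤ ∑ n ∈ D \ St, ‖gradient (f n) (w t)‖ := norm_sum_le _ _
        _ ≤ (D \ St).card • sB := Finset.sum_le_card_nsmul _ _ _
              (fun n hn => hgn n (Finset.mem_sdiff.mp hn).1)
        _ = ((N:ℝ) - Nt) * sB := by
              rw [Finset.card_sdiff_of_subset hsub, hcard, hN, nsmul_eq_mul, Nat.cast_sub hNtN]
      have hc1 : (0:ℝ) ≤ 1/(Nt:ℝ) - 1/(N:ℝ) := by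
        rw [sub_nonneg]
        exact one_div_le_one_div_of_le hNtR hNtNR
      rw [hdecomp]
      calc ‖(1/(Nt:ℝ) - 1/(N:ℝ)) • ∑ n ∈ St, gradient (f n) (w t)
            - (1/(N:ℝ)) • ∑ n ∈ D \ St, gradient (f n) (w t)‖
          ≤ ‖(1/(Nt:ℝ) - 1/(N:ℝ)) • ∑ n ∈ St, gradient (f n) (w t)‖
            + ‖(1/(N:ℝ)) • ∑ n ∈ D \ St, gradient (f n) (w t)‖ := norm_sub_le _ _
        _ = (1/(Nt:ℝ) - 1/(N:ℝ)) * ‖∑ n ∈ St, gradient (f n) (w t)‖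
            + (1/(N:ℝ)) * ‖∑ n ∈ D \ St, gradient (f n) (w t)‖ := by
              rw [norm_smul, norm_smul, Real.norm_eq_abs, Real.norm_eq_abs,
                abs_of_nonneg hc1, abs_of_nonneg (by positivity)]
        _ ≤ (1/(Nt:ℝ) - 1/(N:ℝ)) * ((Nt:ℝ) * sB) + (1/(N:ℝ)) * (((N:ℝ) - Nt) * sB) := by
              gcongr
        _ = 2 * (((N:ℝ) - Nt) / N) * sB := by field_simp; ring
    have hvGf := hsamp (Sf t) Nf (hSfD t ht1 ht2) (hSf t ht1 ht2) hNf
    have hvGc := hsamp (Sc t) Nc (hScD t ht1 ht2) (hSc t ht1 ht2) hNc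
    obtain ⟨vf, hvf⟩ : ∃ z : E, z = (1/(Nf:ℝ)) • ∑ n ∈ Sf t, gradient (f n) (w t) := ⟨_, rfl⟩
    obtain ⟨vc, hvc⟩ : ∃ z : E, z = (1/(Nc:ℝ)) • ∑ n ∈ Sc t, gradient (f n) (w t) := ⟨_, rfl⟩
    obtain ⟨v, hv⟩ : ∃ z : E, z = a1 • vf + a2 • vc := ⟨_, rfl⟩
    rw [← hvf] at hvGf hupd'
    rw [← hvc] at hvGc hupd'
    rw [← hv] at hupd'
    clear hsamp
    have ha12 : a1 + a2 = 1 := by rw [ha1, ha2]; field_simp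
    have ha1nn : 0 ≤ a1 := by rw [ha1]; positivity
    have ha2nn : 0 ≤ a2 := by rw [ha2]; positivity
    have hdec : v - G = a1 • (vf - G) + a2 • (vc - G) := by
      have h : v - G = a1 • vf + a2 • vc - (a1 + a2) • G := by rw [ha12, one_smul, hv]
      rw [h]; module
    have hvG : ‖v - G‖ ≤ 2 * A / ((N:ℝ) * ((Nf:ℝ) + Nc)) * sB := by
      calc ‖v - G‖ = ‖a1 • (vf - G) + a2 • (vc - G)‖ := by rw [hdec]
        _ ≤ ‖a1 • (vf - G)‖ + ‖a2 • (vc - G)‖ := norm_add_le _ _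
        _ = a1 * ‖vf - G‖ + a2 * ‖vc - G‖ := by
            rw [norm_smul, norm_smul, Real.norm_eq_abs, Real.norm_eq_abs,
              abs_of_nonneg ha1nn, abs_of_nonneg ha2nn]
        _ ≤ a1 * (2 * (((N:ℝ) - Nf) / N) * sB) + a2 * (2 * (((N:ℝ) - Nc) / N) * sB) := by
            gcongr
        _ = 2 * A / ((N:ℝ) * ((Nf:ℝ) + Nc)) * sB := by
            rw [ha1, ha2, hA]; field_simp
    have hAN2 : A ≤ (N:ℝ)^2 := by rw [hA]; nlinarith
    have hvG2 : ‖v - G‖ ^ 2 ≤ 4 * A / S * (ξ1 + ξ2 * ‖G‖ ^ 2) := by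
      have h5 : ‖v - G‖ ^ 2 ≤ (2 * A / ((N:ℝ) * ((Nf:ℝ) + Nc))) ^ 2 * (ξ1 + ξ2 * ‖G‖ ^ 2) := by
        have h := mul_self_le_mul_self (norm_nonneg (v - G)) hvG
        nlinarith [hsB2, hsBnn, hApos]
      have hc : (2 * A / ((N:ℝ) * ((Nf:ℝ) + Nc))) ^ 2 ≤ 4 * A / S := by
        rw [hSdef, div_pow, div_le_div_iff₀ (by positivity) (by positivity)]
        nlinarith [mul_le_mul_of_nonneg_left hAN2
          (mul_nonneg (by linarith : (0:ℝ) ≤ 4 * A)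
            (by positivity : (0:ℝ) ≤ ((Nf:ℝ) + Nc)^2))]
      calc ‖v - G‖ ^ 2 ≤ (2 * A / ((N:ℝ) * ((Nf:ℝ) + Nc))) ^ 2 * (ξ1 + ξ2 * ‖G‖ ^ 2) := h5
        _ ≤ 4 * A / S * (ξ1 + ξ2 * ‖G‖ ^ 2) := mul_le_mul_of_nonneg_right hc hBnn
    -- smoothness descent
    have h6 : w (t+1) - w t = -((1/L) • v) := by rw [hupd']; module
    have hinner : ⟪-((1/L) • v), G⟫ = -((1/L) * ⟪v, G⟫) := by
      rw [inner_neg_left, real_inner_smul_left]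
    have hnorm : ‖-((1/L) • v)‖ ^ 2 = (1/L)^2 * ‖v‖^2 := by
      rw [norm_neg, norm_smul, mul_pow, Real.norm_eq_abs, sq_abs]
    have hpolar : ‖v - G‖ ^ 2 = ‖v‖^2 - 2 * ⟪v, G⟫ + ‖G‖^2 := norm_sub_sq_real v G
    have a1' : 2 * L * F (w (t+1)) ≤ 2 * L * F (w t) + (‖v - G‖^2 - ‖G‖^2) := by
      have h := hsm (w (t+1)) (w t)
      rw [← hG, h6, hinner, hnorm] at h
      have h2 := mul_le_mul_of_nonneg_left h (by positivity : (0:ℝ) ≤ 2 * L)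
      have heq : 2 * L * (F (w t) + -((1/L) * ⟪v, G⟫) + L/2 * ((1/L)^2 * ‖v‖^2))
          = 2 * L * F (w t) + (‖v‖^2 - 2 * ⟪v, G⟫) := by field_simp; ring
      rw [heq] at h2
      clear h heq hupd hupd' hsc hsm hf hF hgradbound hmin hgn hdec hvG hvG2 hvGf hvGc hgradF hPL h6 hinner hnorm
      nlinarith [h2, hpolar]
    have a2'' : S * ‖v - G‖^2 ≤ 4 * A * (ξ1 + ξ2 * ‖G‖^2) := by
      calc S * ‖v - G‖^2 ≤ S * (4 * A / S * (ξ1 + ξ2 * ‖G‖^2)) :=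
            mul_le_mul_of_nonneg_left hvG2 hSpos.le
        _ = 4 * A * (ξ1 + ξ2 * ‖G‖^2) := by field_simp [hS0]
    have a3' : 2 * μ * (F (w t) - F wstar) ≤ ‖G‖^2 := by
      have := hPL (w t); rw [← hG] at this; exact this
    have hgapnn : 0 ≤ F (w t) - F wstar := sub_nonneg.mpr (hmin (w t))
    clear hupd hupd' hsc hsm hf hF hgradbound hmin hgn hdec hvG hvG2 hvGf hvGc hgradF hPL h6 hinner hnorm hpolar hsB2 hsBnn ha12 ha1nn ha2nn hAN2 hBnn
    have h2LS : (0:ℝ) < 2 * L * S := by nlinarith [hLS]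
    have hRHS : 2 * L * S * (ρ1 * (F (w t) - F wstar) + ρ2)
        = 2 * (L * S - μ * S + 4 * μ * ξ2 * A) * (F (w t) - F wstar) + 4 * ξ1 * A := by
      rw [hρ1, hρ2]; field_simp [hS0, hL.ne']; ring
    have key : 2 * L * S * (F (w (t+1)) - F wstar)
        ≤ 2 * L * S * (ρ1 * (F (w t) - F wstar) + ρ2) := by
      rw [hRHS]
      nlinarith [mul_le_mul_of_nonneg_left a1' hSpos.le, a2'',
        mul_le_mul_of_nonneg_left a3' (by linarith : (0:ℝ) ≤ S - 4 * A * ξ2),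
        hgapnn, sq_nonneg ‖G‖, hμ, hL, hSpos, hApos]
    exact le_of_mul_le_mul_left key h2LS
  -- iterate
  have hρ1nn : 0 ≤ ρ1 := by
    rw [hρ1]
    have h1 : μ / L ≤ 1 := by rw [div_le_one hL]; exact hμL
    have h2 : 0 ≤ 4 * μ * ξ2 * A / (L * S) := div_nonneg (mul_nonneg (by positivity) hApos.le) hLS.le
    linarith
  have hρ1lt : ρ1 < 1 := by
    rw [hρ1]
    have h1 : 4 * μ * ξ2 * A / (L * S) < μ / L := by
      rw [div_lt_div_iff₀ hLS hL]
      nlinarith [h4A, hμ, hL, mul_lt_mul_of_pos_left h4A (mul_pos hμ hL)]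
    linarith
  have hρ2nn : 0 ≤ ρ2 := by
    rw [hρ2]; exact div_nonneg (mul_nonneg (by linarith) hApos.le) hLS.le
  have hiter : ∀ k : ℕ, k ≤ T →
      F (w (k+1)) - F wstar ≤ ρ1^k * (F (w 1) - F wstar)
        + ρ2 * ∑ i ∈ Finset.range k, ρ1^i := by
    intro k
    induction k with
    | zero => intro _; simp
    | succ k ih =>
      intro hk
      have hk' : k ≤ T := Nat.le_of_succ_le hk
      have h1 := hstep (k+1) (Nat.le_add_left 1 k) hk
      have h2 := ih hk'
      calc F (w (k+1+1)) - F wstar ≤ ρ1 * (F (w (k+1)) - F wstar) + ρ2 := h1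
        _ ≤ ρ1 * (ρ1^k * (F (w 1) - F wstar) + ρ2 * ∑ i ∈ Finset.range k, ρ1^i) + ρ2 := by
            nlinarith [h2, hρ1nn]
        _ = ρ1^(k+1) * (F (w 1) - F wstar) + ρ2 * ∑ i ∈ Finset.range (k+1), ρ1^i := by
            rw [geom_sum_succ]; ring
  have hfin := hiter T le_rfl
  rw [geom_sum_eq (ne_of_lt hρ1lt) T] at hfin
  have hne1 : ρ1 - 1 ≠ 0 := sub_ne_zero.mpr (ne_of_lt hρ1lt)
  have hne2 : (1:ℝ) - ρ1 ≠ 0 := sub_ne_zero.mpr (ne_of_gt hρ1lt)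
  have heq : ρ2 * ((ρ1^T - 1)/(ρ1 - 1)) = ρ2 * (1 - ρ1^T) / (1 - ρ1) := by
    field_simp
    ring
  linarith [hfin, heq.symm.le, heq.le]
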